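/- Let D₁ and D₂ be probability distributions on a finite set, let E be an event (a subset of that set) with Pr_{x∼D₁}[E] ≥ a, and suppose ‖D₁ − D₂‖ ≤ κ with κ < a. Let D₁′ and D₂′ denote D₁ and D₂ respectively conditioned on E. Then ‖D₁′ − D₂′‖ ≤ κ/(a − κ). -/

import Mathlib

open Finset

/-- if Pr_{D₁}[E] ≥ a and ‖D₁ − D₂‖ ≤ κ < a, then the conditioned
distributions satisfy ‖D₁′ − D₂′‖ ≤ κ/(a − κ). -/
theorem conditioned_variation_distance {X : Type*} [Fintype X] [DecidableEq X]
    (D₁ D₂ : X → ℝ)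
    (h₁ : ∀ x, 0 ≤ D₁ x) (h₁s : ∑ x, D₁ x = 1)
    (h₂ : ∀ x, 0 ≤ D₂ x) (h₂s : ∑ x, D₂ x = 1)
    (E : Finset X) (a κ : ℝ)
    (ha : a ≤ ∑ x ∈ E, D₁ x)
    (hκ : (1 / 2) * ∑ x, |D₁ x - D₂ x| ≤ κ) (hκa : κ < a) :
    (1 / 2) * ∑ x, |(if x ∈ E then D₁ x / ∑ y ∈ E, D₁ y else 0) -
        (if x ∈ E then D₂ x / ∑ y ∈ E, D₂ y else 0)| ≤ κ / (a - κ) := by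
  set p := ∑ y ∈ E, D₁ y with hp_def
  set q := ∑ y ∈ E, D₂ y with hq_def
  have hk0 : 0 ≤ κ := le_trans (by positivity) hκ
  have ha0 : 0 < a := lt_of_le_of_lt hk0 hκa
  have hp0 : 0 < p := lt_of_lt_of_le ha0 ha
  have hsum2 : ∑ x, |D₁ x - D₂ x| ≤ 2 * κ := by linarith
  -- complement identity
  have hE : ∑ x ∈ E, (D₁ x - D₂ x) = p - q := by
    rw [Finset.sum_sub_distrib]
  have hEc : ∑ x ∈ Eᶜ, (D₁ x - D₂ x) = -(p - q) := by
    have h1 : ∑ x ∈ E, (D₁ x - D₂ x) + ∑ x ∈ Eᶜ, (D₁ x - D₂ x) = 0 := by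
      rw [Finset.sum_add_sum_compl, Finset.sum_sub_distrib, h₁s, h₂s]; ring
    linarith
  have htot : ∑ x ∈ E, |D₁ x - D₂ x| + ∑ x ∈ Eᶜ, |D₁ x - D₂ x| ≤ 2 * κ := by
    rw [Finset.sum_add_sum_compl]; exact hsum2
  have hpqE : |p - q| ≤ ∑ x ∈ E, |D₁ x - D₂ x| := by
    calc |p - q| = |∑ x ∈ E, (D₁ x - D₂ x)| := by rw [hE]
      _ ≤ ∑ x ∈ E, |D₁ x - D₂ x| := Finset.abs_sum_le_sum_abs _ _
  have hpqEc : |p - q| ≤ ∑ x ∈ Eᶜ, |D₁ x - D₂ x| := by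
    calc |p - q| = |∑ x ∈ Eᶜ, (D₁ x - D₂ x)| := by rw [hEc, abs_neg]
      _ ≤ ∑ x ∈ Eᶜ, |D₁ x - D₂ x| := Finset.abs_sum_le_sum_abs _ _
  have hpqk : |p - q| ≤ κ := by linarith
  have hq0 : 0 < q := by
    have := abs_le.1 hpqk
    linarith [this.2]
  -- reduce the full sum to a sum over E
  have hreduce : ∑ x, |(if x ∈ E then D₁ x / p else 0) - (if x ∈ E then D₂ x / q else 0)|
      = ∑ x ∈ E, |D₁ x / p - D₂ x / q| := by
    rw [← Finset.sum_subset (Finset.subset_univ E)]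
    · exact Finset.sum_congr rfl (fun x hx => by rw [if_pos hx, if_pos hx])
    · intro x _ hx
      rw [if_neg hx, if_neg hx]
      simp
  -- per-term bound
  have step : ∀ x ∈ E, |D₁ x / p - D₂ x / q| ≤ |D₁ x - D₂ x| / p + D₂ x * (|p - q| / (p * q)) := by
    intro x _
    have e : D₁ x / p - D₂ x / q = (D₁ x - D₂ x) / p + D₂ x * ((q - p) / (p * q)) := by
      field_simp
      ring
    calc |D₁ x / p - D₂ x / q|
        = |(D₁ x - D₂ x) / p + D₂ x * ((q - p) / (p * q))| := by rw [e]
      _ ≤ |(D₁ x - D₂ x) / p| + |D₂ x * ((q - p) / (p * q))| := abs_add_le _ _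
      _ = |D₁ x - D₂ x| / p + D₂ x * (|p - q| / (p * q)) := by
          rw [abs_div, abs_mul, abs_div, abs_mul, abs_of_pos hp0, abs_of_pos hq0,
            abs_of_nonneg (h₂ x), abs_sub_comm q p]
  have key : ∑ x ∈ E, |D₁ x / p - D₂ x / q|
      ≤ (∑ x ∈ E, |D₁ x - D₂ x|) / p + |p - q| / p := by
    calc ∑ x ∈ E, |D₁ x / p - D₂ x / q|
        ≤ ∑ x ∈ E, (|D₁ x - D₂ x| / p + D₂ x * (|p - q| / (p * q))) :=
          Finset.sum_le_sum step
      _ = (∑ x ∈ E, |D₁ x - D₂ x|) / p + q * (|p - q| / (p * q)) := by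
          rw [Finset.sum_add_distrib, ← Finset.sum_div, ← Finset.sum_mul]
      _ = (∑ x ∈ E, |D₁ x - D₂ x|) / p + |p - q| / p := by
          field_simp
  have hfin : ∑ x ∈ E, |D₁ x / p - D₂ x / q| ≤ 2 * κ / p := by
    rw [← add_div] at key
    refine le_trans key ?_
    gcongr
    linarith
  rw [hreduce]
  calc (1 / 2) * ∑ x ∈ E, |D₁ x / p - D₂ x / q| ≤ (1 / 2) * (2 * κ / p) := by linarith
    _ = κ / p := by ring
    _ ≤ κ / (a - κ) := by
        gcongr
        · linarith
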